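/- Let (x_α)_{α∈I} be a bounded net in a CAT(0) space X, indexed by a directed set I, that converges weakly to a point x ∈ X. Then there exist indices α_1 ≤ α_2 ≤ α_3 ≤ … in I such that the sequence (x_{α_i}) converges weakly to x. -/

import Mathlib

open Filter Topology Metric Set

/-- `m` is a midpoint of `x` and `y`. -/
def IsMidpoint {X : Type*} [MetricSpace X] (x y m : X) : Prop :=
  dist x m = dist x y / 2 ∧ dist y m = dist x y / 2

/-- A CAT(0) space: a complete metric space with midpoints satisfying the
CN-inequality of Bruhat–Tits. -/
def IsCAT0 (X : Type*) [MetricSpace X] : Prop :=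
  CompleteSpace X ∧
    (∀ x y : X, ∃ m : X, IsMidpoint x y m) ∧
    (∀ x y z m : X, IsMidpoint x y m →
      dist z m ^ 2 ≤ dist z x ^ 2 / 2 + dist z y ^ 2 / 2 - dist x y ^ 2 / 4)

/-- `G` is a (compact) geodesic segment starting at `x`: the image of an
isometric embedding of a compact interval `[0, L]` whose left endpoint is
mapped to `x`. -/
def IsGeodesicSegmentFrom {X : Type*} [MetricSpace X] (x : X) (G : Set X) : Prop :=
  ∃ (L : ℝ) (γ : ℝ → X), 0 ≤ L ∧ γ 0 = x ∧
    (∀ s ∈ Icc (0:ℝ) L, ∀ t ∈ Icc (0:ℝ) L, dist (γ s) (γ t) = |s - t|) ∧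
    G = γ '' Icc (0:ℝ) L

/-- `G` is a geodesic segment from `x` to `y`. -/
def IsGeodesicSegmentBetween {X : Type*} [MetricSpace X] (x y : X) (G : Set X) : Prop :=
  ∃ γ : ℝ → X, γ 0 = x ∧ γ (dist x y) = y ∧
    (∀ s ∈ Icc (0:ℝ) (dist x y), ∀ t ∈ Icc (0:ℝ) (dist x y),
      dist (γ s) (γ t) = |s - t|) ∧
    G = γ '' Icc (0:ℝ) (dist x y)

/-- `p` is a nearest point of `C` to `z` (a closest-point projection of `z`
onto `C`). -/
def IsNearestPoint {X : Type*} [MetricSpace X] (z : X) (C : Set X) (p : X) : Prop :=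
  p ∈ C ∧ ∀ q ∈ C, dist z p ≤ dist z q

/-- Weak (Δ-)convergence of a net `u` (indexed by a preordered set) to `x`:
for every geodesic segment `G` starting at `x`, the closest-point projections
of the `u i` onto `G` converge to `x` in the metric. -/
def WeakConv {X : Type*} [MetricSpace X] {I : Type*} [Preorder I]
    (u : I → X) (x : X) : Prop :=
  ∀ G : Set X, IsGeodesicSegmentFrom x G →
    ∀ p : I → X, (∀ i, IsNearestPoint (u i) G (p i)) → Tendsto p atTop (𝓝 x)

/-- The sets that are closed in the weak topology `T_Δ`: sets containing all
weak limits of bounded sequences of their elements. -/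
def TdeltaClosed {X : Type*} [MetricSpace X] (A : Set X) : Prop :=
  ∀ u : ℕ → X, (∀ n, u n ∈ A) → Bornology.IsBounded (Set.range u) →
    ∀ x : X, WeakConv u x → x ∈ A

/-- `T` is the weak topology `T_Δ`: its closed sets are exactly the weakly
sequentially closed sets. -/
def IsWeakTopology {X : Type*} [MetricSpace X] (T : TopologicalSpace X) : Prop :=
  ∀ A : Set X, @IsClosed X T A ↔ TdeltaClosed A

/-- Geodesic convexity of a subset of a metric space. -/
def GeodesicallyConvex {X : Type*} [MetricSpace X] (C : Set X) : Prop :=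
  ∀ x ∈ C, ∀ y ∈ C, ∀ G : Set X, IsGeodesicSegmentBetween x y G → G ⊆ C

/-- The coconvex topology `T_co`: the coarsest topology on `X` in which every
metrically closed, (geodesically) convex set is closed. -/
def coconvexTopology (X : Type*) [MetricSpace X] : TopologicalSpace X :=
  TopologicalSpace.generateFrom
    {U : Set X | ∃ C : Set X, IsClosed C ∧ GeodesicallyConvex C ∧ U = Cᶜ}

section Basics

variable {X : Type*} [MetricSpace X]

lemma IsMidpoint.symm' {x y m : X} (h : IsMidpoint x y m) : IsMidpoint y x m :=
  ⟨by rw [h.2, dist_comm], by rw [h.1, dist_comm]⟩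

/-- quadratic helper : if `a ≥ b - ε` with everything nonneg then `a^2 ≥ b^2 - 2bε`. -/
lemma sq_lower {a b ε : ℝ} (ha : 0 ≤ a) (hb : 0 ≤ b) (hε : 0 ≤ ε) (h : b - ε ≤ a) :
    b ^ 2 - 2 * b * ε ≤ a ^ 2 := by
  rcases le_or_gt b ε with hc | hc
  · nlinarith
  · nlinarith [mul_self_le_mul_self (by linarith : (0:ℝ) ≤ b - ε) h]

/-- Midpoints with a common endpoint. -/
lemma midpoint_dist_half (hX : IsCAT0 X) {a b c m1 m2 : X}
    (h1 : IsMidpoint a b m1) (h2 : IsMidpoint a c m2) : dist m1 m2 ≤ dist b c / 2 := by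
  have hcn1 := hX.2.2 a c m1 m2 h2
  have hcn2 := hX.2.2 a b c m1 h1
  have e1 : dist m1 a = dist a b / 2 := by rw [dist_comm]; exact h1.1
  have e2 : dist c m1 = dist m1 c := dist_comm c m1
  have e3 : dist c a = dist a c := dist_comm c a
  have e4 : dist c b = dist b c := dist_comm c b
  rw [e1] at hcn1
  rw [e2, e3, e4] at hcn2
  nlinarith [dist_nonneg (x := m1) (y := m2), dist_nonneg (x := b) (y := c)]

/-- Midpoint map is 1-Lipschitz in each coordinate (pairwise version). -/
lemma midpoint_dist_pair (hX : IsCAT0 X) {a b a' b' m m' : X}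
    (h : IsMidpoint a b m) (h' : IsMidpoint a' b' m') :
    dist m m' ≤ (dist a a' + dist b b') / 2 := by
  obtain ⟨k, hk⟩ := hX.2.1 a b'
  have d1 : dist m k ≤ dist b b' / 2 := midpoint_dist_half hX h hk
  have d2 : dist k m' ≤ dist a a' / 2 := midpoint_dist_half hX hk.symm' h'.symm'
  calc dist m m' ≤ dist m k + dist k m' := dist_triangle _ _ _
    _ ≤ dist b b' / 2 + dist a a' / 2 := add_le_add d1 d2
    _ = (dist a a' + dist b b') / 2 := by ring

/-- A set with midpoints inside. -/
def MidClosed {X : Type*} [MetricSpace X] (S : Set X) : Prop :=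
  ∀ a ∈ S, ∀ b ∈ S, ∃ m ∈ S, IsMidpoint a b m

/-- The fundamental inequality for nearest-point projections onto
midpoint-closed sets. -/
lemma proj_ineq (hX : IsCAT0 X) {S : Set X} (hS : MidClosed S) {z p : X}
    (hp : IsNearestPoint z S p) {q : X} (hq : q ∈ S) :
    dist z p ^ 2 + dist p q ^ 2 ≤ dist z q ^ 2 := by
  have key : ∀ k : ℕ, ∀ q ∈ S,
      dist z p ^ 2 + (1 - (1/2 : ℝ) ^ k) * dist p q ^ 2 ≤ dist z q ^ 2 := by
    intro k
    induction k with
    | zero =>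
      intro q hq
      have := hp.2 q hq
      nlinarith [dist_nonneg (x := z) (y := p)]
    | succ k ih =>
      intro q hq
      obtain ⟨m, hmS, hm⟩ := hS p hp.1 q hq
      have hcn := hX.2.2 p q z m hm
      have him := ih m hmS
      have e : dist p m = dist p q / 2 := hm.1
      rw [e] at him
      have h2 : (1/2:ℝ)^(k+1) = (1/2:ℝ)^k/2 := by ring
      nlinarith [dist_nonneg (x := p) (y := q)]
  have hl : Filter.Tendsto (fun k : ℕ => dist z p ^ 2 + (1 - (1/2 : ℝ) ^ k) * dist p q ^ 2)
      Filter.atTop (nhds (dist z p ^ 2 + (1 - 0) * dist p q ^ 2)) := by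
    exact Filter.Tendsto.add tendsto_const_nhds
      (Filter.Tendsto.mul (Filter.Tendsto.const_sub _
        (tendsto_pow_atTop_nhds_zero_of_lt_one (by norm_num) (by norm_num))) tendsto_const_nhds)
  have := le_of_tendsto hl (Filter.Eventually.of_forall (fun k => key k q hq))
  linarith

/-- Nearest points exist on nonempty compact sets. -/
lemma nearest_of_compact {G : Set X} (hG : IsCompact G) (hne : G.Nonempty) (z : X) :
    ∃ p, IsNearestPoint z G p := by
  obtain ⟨p, hpG, hmin⟩ := hG.exists_isMinOn hne
    ((continuous_const.dist continuous_id).continuousOn (s := G))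
  exact ⟨p, hpG, fun q hq => hmin hq⟩

end Basics
section Proj

variable {X : Type*} [MetricSpace X]

/-- The closure of a midpoint-closed set is midpoint-closed. -/
lemma midClosed_closure (hX : IsCAT0 X) {Q : Set X} (hQ : MidClosed Q) :
    MidClosed (closure Q) := by
  intro a ha b hb
  obtain ⟨v, hvQ, hva⟩ := mem_closure_iff_seq_limit.mp ha
  obtain ⟨w, hwQ, hwb⟩ := mem_closure_iff_seq_limit.mp hb
  choose m hmQ hmid using fun n => hQ (v n) (hvQ n) (w n) (hwQ n)
  have hcau : CauchySeq m := by
    rw [Metric.cauchySeq_iff]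
    intro ε hε
    obtain ⟨N1, hN1⟩ := (Metric.cauchySeq_iff.mp hva.cauchySeq) ε hε
    obtain ⟨N2, hN2⟩ := (Metric.cauchySeq_iff.mp hwb.cauchySeq) ε hε
    refine ⟨max N1 N2, fun i hi j hj => ?_⟩
    have h1 := hN1 i (le_of_max_le_left hi) j (le_of_max_le_left hj)
    have h2 := hN2 i (le_of_max_le_right hi) j (le_of_max_le_right hj)
    have := midpoint_dist_pair hX (hmid i) (hmid j)
    calc dist (m i) (m j) ≤ (dist (v i) (v j) + dist (w i) (w j)) / 2 := this
      _ < ε := by linarith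
  haveI : CompleteSpace X := hX.1
  obtain ⟨c, hc⟩ := cauchySeq_tendsto_of_complete hcau
  refine ⟨c, mem_closure_of_tendsto hc (Filter.Eventually.of_forall hmQ), ?_, ?_⟩
  · have t1 : Filter.Tendsto (fun n => dist (v n) (m n)) Filter.atTop (nhds (dist a c)) :=
      hva.dist hc
    have t2 : (fun n => dist (v n) (m n)) = fun n => dist (v n) (w n) / 2 := by
      funext n; exact (hmid n).1
    rw [t2] at t1
    have t3 : Filter.Tendsto (fun n => dist (v n) (w n) / 2) Filter.atTop
        (nhds (dist a b / 2)) := (hva.dist hwb).div_const 2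
    exact tendsto_nhds_unique t1 t3
  · have t1 : Filter.Tendsto (fun n => dist (w n) (m n)) Filter.atTop (nhds (dist b c)) :=
      hwb.dist hc
    have t2 : (fun n => dist (w n) (m n)) = fun n => dist (v n) (w n) / 2 := by
      funext n; exact (hmid n).2
    rw [t2] at t1
    have t3 : Filter.Tendsto (fun n => dist (v n) (w n) / 2) Filter.atTop
        (nhds (dist a b / 2)) := (hva.dist hwb).div_const 2
    exact tendsto_nhds_unique t1 t3

/-- Nearest points exist on nonempty closed midpoint-closed subsets of a
complete CAT(0) space. -/
lemma nearest_of_closed_midClosed (hX : IsCAT0 X) {C : Set X} (hC : IsClosed C)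
    (hmc : MidClosed C) (hne : C.Nonempty) (z : X) : ∃ p, IsNearestPoint z C p := by
  haveI : CompleteSpace X := hX.1
  set δ := Metric.infDist z C with hδdef
  have hδ0 : 0 ≤ δ := Metric.infDist_nonneg
  have hex : ∀ n : ℕ, ∃ w ∈ C, dist z w < δ + 1/(n+1) := by
    intro n
    have : Metric.infDist z C < δ + 1/(n+1) := by
      have : (0:ℝ) < 1/(n+1) := by positivity
      linarith
    obtain ⟨w, hwC, hw⟩ := (Metric.infDist_lt_iff hne).mp this
    exact ⟨w, hwC, hw⟩
  choose w hwC hw using hex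
  have hdlow : ∀ n, δ ≤ dist z (w n) := fun n => Metric.infDist_le_dist_of_mem (hwC n)
  have key : ∀ i j N : ℕ, N ≤ i → N ≤ j →
      dist (w i) (w j) ^ 2 ≤ 8 * (δ + 1) / (N + 1) := by
    intro i j N hi hj
    obtain ⟨m, hmC, hm⟩ := hmc (w i) (hwC i) (w j) (hwC j)
    have hcn := hX.2.2 (w i) (w j) z m hm
    have hlm : δ ≤ dist z m := Metric.infDist_le_dist_of_mem hmC
    have hbi : dist z (w i) < δ + 1/(i+1) := hw i
    have hbj : dist z (w j) < δ + 1/(j+1) := hw j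
    have hNi : 1/((i:ℝ)+1) ≤ 1/((N:ℝ)+1) := by
      apply one_div_le_one_div_of_le (by positivity)
      linarith [(Nat.cast_le (α := ℝ)).mpr hi]
    have hNj : 1/((j:ℝ)+1) ≤ 1/((N:ℝ)+1) := by
      apply one_div_le_one_div_of_le (by positivity)
      linarith [(Nat.cast_le (α := ℝ)).mpr hj]
    have hN1 : 1/((N:ℝ)+1) ≤ 1 := by
      rw [div_le_one (by positivity)]; linarith [Nat.cast_nonneg (α := ℝ) N]
    have hNpos : (0:ℝ) < 1/((N:ℝ)+1) := by positivity
    have s1 : dist z (w i) ^ 2 ≤ (δ + 1/((i:ℝ)+1)) ^ 2 := by nlinarith [hdlow i]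
    have s2 : dist z (w j) ^ 2 ≤ (δ + 1/((j:ℝ)+1)) ^ 2 := by nlinarith [hdlow j]
    have l1 : δ * (1/((i:ℝ)+1)) ≤ δ * (1/((N:ℝ)+1)) := mul_le_mul_of_nonneg_left hNi hδ0
    have l2 : δ * (1/((j:ℝ)+1)) ≤ δ * (1/((N:ℝ)+1)) := mul_le_mul_of_nonneg_left hNj hδ0
    have l3 : (1/((i:ℝ)+1)) ^ 2 ≤ (1/((N:ℝ)+1)) ^ 2 := pow_le_pow_left₀ (by positivity) hNi 2
    have l4 : (1/((j:ℝ)+1)) ^ 2 ≤ (1/((N:ℝ)+1)) ^ 2 := pow_le_pow_left₀ (by positivity) hNj 2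
    have l5 : (1/((N:ℝ)+1)) ^ 2 ≤ 1/((N:ℝ)+1) := by nlinarith
    have hrw : 8 * (δ + 1) / ((N:ℝ)+1) = 8 * (δ + 1) * (1/((N:ℝ)+1)) := by ring
    rw [hrw]
    nlinarith [hlm, hδ0]
  have hcau : CauchySeq w := by
    refine cauchySeq_of_le_tendsto_0 (fun N : ℕ => Real.sqrt (8 * (δ + 1) / ((N:ℝ) + 1))) ?_ ?_
    · intro n m N hn hm
      have h2 := key n m N hn hm
      have := Real.sqrt_le_sqrt h2
      calc dist (w n) (w m) = Real.sqrt (dist (w n) (w m) ^ 2) := by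
            rw [Real.sqrt_sq dist_nonneg]
        _ ≤ Real.sqrt (8 * (δ + 1) / (N + 1)) := Real.sqrt_le_sqrt h2
    · have : Filter.Tendsto (fun N : ℕ => 8 * (δ + 1) / (N + 1)) Filter.atTop (nhds 0) := by
        have := tendsto_one_div_add_atTop_nhds_zero_nat (𝕜 := ℝ)
        have h8 : Filter.Tendsto (fun N : ℕ => 8 * (δ + 1) * (1 / (N + 1))) Filter.atTop
            (nhds (8 * (δ + 1) * 0)) := this.const_mul _
        simpa [div_eq_mul_inv] using h8
      have hs := (Real.continuous_sqrt.tendsto 0).comp this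
      simpa [Function.comp_def] using hs
  obtain ⟨p, hp⟩ := cauchySeq_tendsto_of_complete hcau
  have hpC : p ∈ C := hC.mem_of_tendsto hp (Filter.Eventually.of_forall hwC)
  have hdist : dist z p = δ := by
    have t1 : Filter.Tendsto (fun n => dist z (w n)) Filter.atTop (nhds (dist z p)) :=
      tendsto_const_nhds.dist hp
    have t2 : Filter.Tendsto (fun n : ℕ => δ + 1/(n+1)) Filter.atTop (nhds (δ + 0)) :=
      tendsto_const_nhds.add tendsto_one_div_add_atTop_nhds_zero_nat
    rw [add_zero] at t2
    have hge : dist z p ≤ δ := le_of_tendsto_of_tendsto' t1 t2 (fun n => (hw n).le)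
    exact le_antisymm hge (Metric.infDist_le_dist_of_mem hpC)
  exact ⟨p, hpC, fun q hq => by rw [hdist]; exact Metric.infDist_le_dist_of_mem hq⟩

end Proj
section Geodesic

variable {X : Type*} [MetricSpace X]

/-- Dyadic chain of iterated midpoints between `a` and `b`. -/
noncomputable def dyadicChain (μ : X → X → X) (a b : X) : ℕ → ℕ → X
  | 0, i => if i = 0 then a else b
  | (k+1), i =>
      if i % 2 = 0 then dyadicChain μ a b k (i / 2)
      else μ (dyadicChain μ a b k (i / 2)) (dyadicChain μ a b k (i / 2 + 1))

lemma chain_upper {f : ℕ → X} {N : ℕ} {cst : ℝ}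
    (hcons : ∀ i < N, dist (f i) (f (i+1)) ≤ cst) :
    ∀ i j, i ≤ j → j ≤ N → dist (f i) (f j) ≤ ((j:ℝ) - i) * cst := by
  intro i j hij hjN
  induction j, hij using Nat.le_induction with
  | base => simp
  | succ j hij ih =>
    have hjN' : j ≤ N := Nat.le_of_succ_le hjN
    have h1 := ih hjN'
    have h2 := hcons j (Nat.lt_of_succ_le hjN)
    have : dist (f i) (f (j+1)) ≤ dist (f i) (f j) + dist (f j) (f (j+1)) :=
      dist_triangle _ _ _
    push_cast
    linarith

lemma chain_exact {f : ℕ → X} {N : ℕ} {cst : ℝ} (hcst : 0 ≤ cst)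
    (hcons : ∀ i < N, dist (f i) (f (i+1)) ≤ cst)
    (hends : dist (f 0) (f N) = (N:ℝ) * cst) :
    ∀ i ≤ N, ∀ j ≤ N, dist (f i) (f j) = |(i:ℝ) - j| * cst := by
  have main : ∀ i j, i ≤ j → j ≤ N → dist (f i) (f j) = ((j:ℝ) - i) * cst := by
    intro i j hij hjN
    have hup := chain_upper hcons i j hij hjN
    have h0i := chain_upper hcons 0 i (Nat.zero_le i) (hij.trans hjN)
    have hjN2 := chain_upper hcons j N hjN (le_refl N)
    have htri : dist (f 0) (f N) ≤ dist (f 0) (f i) + dist (f i) (f j) + dist (f j) (f N) := by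
      calc dist (f 0) (f N) ≤ dist (f 0) (f j) + dist (f j) (f N) := dist_triangle _ _ _
        _ ≤ dist (f 0) (f i) + dist (f i) (f j) + dist (f j) (f N) := by
            linarith [dist_triangle (f 0) (f i) (f j)]
    rw [hends] at htri
    simp only [Nat.cast_zero, sub_zero] at h0i
    linarith
  intro i hi j hj
  rcases le_total i j with hij | hij
  · have hc : ((i:ℝ)) ≤ (j:ℝ) := Nat.cast_le.mpr hij
    rw [main i j hij hj, abs_of_nonpos (by linarith : (i:ℝ) - j ≤ 0)]
    try ring
  · have hc : ((j:ℝ)) ≤ (i:ℝ) := Nat.cast_le.mpr hij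
    rw [dist_comm, main j i hij hi, abs_of_nonneg (by linarith : (0:ℝ) ≤ (i:ℝ) - j)]
    try ring

variable {μ : X → X → X} {a b : X}

lemma dyadicChain_zero (μ : X → X → X) (a b : X) : ∀ k, dyadicChain μ a b k 0 = a := by
  intro k
  induction k with
  | zero => simp [dyadicChain]
  | succ k ih => simp [dyadicChain, ih]

lemma dyadicChain_top (μ : X → X → X) (a b : X) : ∀ k, dyadicChain μ a b k (2^k) = b := by
  intro k
  induction k with
  | zero => simp [dyadicChain]
  | succ k ih =>
    have h1 : 2^(k+1) % 2 = 0 := by omega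
    have h2 : 2^(k+1) / 2 = 2^k := by omega
    simp [dyadicChain, h1, h2, ih]

lemma dyadicChain_even (μ : X → X → X) (a b : X) (k i : ℕ) :
    dyadicChain μ a b (k+1) (2*i) = dyadicChain μ a b k i := by
  have h1 : (2*i) % 2 = 0 := by omega
  have h2 : (2*i) / 2 = i := by omega
  simp [dyadicChain, h1, h2]

lemma dyadicChain_dist (hμ : ∀ x y : X, IsMidpoint x y (μ x y)) :
    ∀ k, ∀ i ≤ 2^k, ∀ j ≤ 2^k,
      dist (dyadicChain μ a b k i) (dyadicChain μ a b k j)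
        = |(i:ℝ) - j| * (dist a b / 2^k) := by
  intro k
  induction k with
  | zero =>
    intro i hi j hj
    interval_cases i <;> interval_cases j <;>
      simp [dyadicChain, dist_comm] <;> norm_num
  | succ k ih =>
    set c := dyadicChain μ a b
    have hcons : ∀ i < 2^(k+1), dist (c (k+1) i) (c (k+1) (i+1)) = dist a b / 2^(k+1) := by
      intro i hi
      rcases Nat.even_or_odd i with ⟨m, hm⟩ | ⟨m, hm⟩
      · subst hm
        have hmlt : m < 2^k := by
          have : 2*m < 2^(k+1) := by omega
          omega
        have e1 : c (k+1) (m+m) = c k m := by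
          rw [show m + m = 2*m by ring]; exact dyadicChain_even μ a b k m
        have h1 : (m+m+1) % 2 = 1 := by omega
        have h2 : (m+m+1) / 2 = m := by omega
        have e2 : c (k+1) (m+m+1) = μ (c k m) (c k (m+1)) := by
          show dyadicChain μ a b (k+1) (m+m+1) = _
          simp [dyadicChain, h1, h2]
          rfl
        rw [e1, e2, (hμ (c k m) (c k (m+1))).1,
          ih m (by omega) (m+1) (by omega)]
        push_cast
        rw [show ((m:ℝ) - (m+1)) = -1 by ring]
        norm_num
        try ring
      · subst hm
        have hmlt : m + 1 ≤ 2^k := by omega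
        have h1 : (2*m+1) % 2 = 1 := by omega
        have h2 : (2*m+1) / 2 = m := by omega
        have e1 : c (k+1) (2*m+1) = μ (c k m) (c k (m+1)) := by
          show dyadicChain μ a b (k+1) (2*m+1) = _
          simp [dyadicChain, h1, h2]
          rfl
        have e2 : c (k+1) (2*m+1+1) = c k (m+1) := by
          rw [show 2*m+1+1 = 2*(m+1) by ring]; exact dyadicChain_even μ a b k (m+1)
        rw [e1, e2, dist_comm, (hμ (c k m) (c k (m+1))).2,
          ih m (by omega) (m+1) (by omega)]
        push_cast
        rw [show ((m:ℝ) - (m+1)) = -1 by ring]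
        norm_num
        try ring
    have hends : dist (c (k+1) 0) (c (k+1) (2^(k+1))) = ((2^(k+1) : ℕ) : ℝ) * (dist a b / 2^(k+1)) := by
      show dist (dyadicChain μ a b (k+1) 0) (dyadicChain μ a b (k+1) (2^(k+1))) = _
      rw [dyadicChain_zero, dyadicChain_top]
      push_cast
      field_simp
    have hcst : (0:ℝ) ≤ dist a b / 2^(k+1) := by positivity
    exact chain_exact hcst (fun i hi => (hcons i hi).le) hends
end Geodesic
section GeodesicMain

variable {X : Type*} [MetricSpace X]

/-- Basic properties of a geodesic segment starting at `x`. -/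
lemma geodesicFrom_props {x : X} {G : Set X} (hG : IsGeodesicSegmentFrom x G) :
    x ∈ G ∧ IsCompact G ∧ MidClosed G := by
  obtain ⟨L, γ, hL, h0, hiso, rfl⟩ := hG
  have hcont : ContinuousOn γ (Icc (0:ℝ) L) := by
    intro s hs
    rw [Metric.continuousWithinAt_iff]
    intro ε hε
    refine ⟨ε, hε, fun {t} ht hlt => ?_⟩
    rw [hiso t ht s hs]
    rwa [Real.dist_eq] at hlt
  refine ⟨⟨0, ⟨le_refl 0, hL⟩, h0⟩, isCompact_Icc.image_of_continuousOn hcont, ?_⟩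
  rintro p ⟨s, hs, rfl⟩ q ⟨t, ht, rfl⟩
  have hmid : (s+t)/2 ∈ Icc (0:ℝ) L := by
    constructor
    · have := hs.1; have := ht.1; linarith
    · have := hs.2; have := ht.2; linarith
  refine ⟨γ ((s+t)/2), ⟨(s+t)/2, hmid, rfl⟩, ?_, ?_⟩
  · rw [hiso s hs ((s+t)/2) hmid, hiso s hs t ht,
      show s - (s+t)/2 = (s-t)/2 by ring, abs_div]
    simp
  · rw [hiso t ht ((s+t)/2) hmid, hiso s hs t ht,
      show t - (s+t)/2 = -((s-t)/2) by ring, abs_neg, abs_div]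
    simp

/-- Existence of geodesic segments in a CAT(0) space. -/
lemma exists_geodesic (hX : IsCAT0 X) (a b : X) :
    ∃ G : Set X, IsGeodesicSegmentFrom a G ∧ b ∈ G := by
  haveI : CompleteSpace X := hX.1
  by_cases hab : dist a b = 0
  · have hba : b = a := (dist_eq_zero.mp hab).symm
    refine ⟨{a}, ⟨0, fun _ => a, le_refl 0, rfl, ?_, ?_⟩, by simp [hba]⟩
    · intro s hs t ht
      have hs0 : s = 0 := le_antisymm hs.2 hs.1
      have ht0 : t = 0 := le_antisymm ht.2 ht.1
      simp [hs0, ht0]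
    · rw [show Icc (0:ℝ) 0 = {0} by simp]
      simp
  · set d := dist a b with hd
    have hd0 : 0 < d := lt_of_le_of_ne dist_nonneg (Ne.symm hab)
    choose μ hμ using hX.2.1
    set c := dyadicChain μ a b with hc
    have key := dyadicChain_dist (a := a) (b := b) hμ
    set Ind : ℝ → ℕ → ℕ := fun t n => ⌊t * 2^n / d⌋₊ with hInd
    have hIndle : ∀ t ∈ Icc (0:ℝ) d, ∀ n, Ind t n ≤ 2^n := by
      intro t ht n
      have h1 : t * 2^n / d ≤ ((2^n : ℕ) : ℝ) := by
        push_cast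
        rw [div_le_iff₀ hd0]
        have h2 : (0:ℝ) ≤ 2^n := by positivity
        nlinarith [ht.2]
      calc Ind t n ≤ ⌊((2^n : ℕ) : ℝ)⌋₊ := Nat.floor_mono h1
        _ = 2^n := Nat.floor_natCast _
    have h2n0 : Filter.Tendsto (fun n : ℕ => d / 2^n) Filter.atTop (nhds 0) := by
      have hp : Filter.Tendsto (fun n : ℕ => (1/2:ℝ)^n) Filter.atTop (nhds 0) :=
        tendsto_pow_atTop_nhds_zero_of_lt_one (by norm_num) (by norm_num)
      have := hp.const_mul d
      rw [mul_zero] at this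
      convert this using 2 with n
      rw [div_pow, one_pow, mul_one_div]
    have hstep : ∀ t ∈ Icc (0:ℝ) d, ∀ n,
        dist (c n (Ind t n)) (c (n+1) (Ind t (n+1))) ≤ d / 2^(n+1) := by
      intro t ht n
      have hy0 : 0 ≤ t * 2^n / d := by
        have := ht.1
        positivity
      have hdouble : t * 2^(n+1) / d = 2 * (t * 2^n / d) := by ring
      have hlow : 2 * Ind t n ≤ Ind t (n+1) := by
        apply Nat.le_floor
        rw [hdouble]
        push_cast
        have := Nat.floor_le hy0
        linarith
      have hhigh : Ind t (n+1) ≤ 2 * Ind t n + 1 := by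
        have hy0' : 0 ≤ t * 2^(n+1) / d := by rw [hdouble]; linarith
        have h2 : t * 2^(n+1) / d < ((2 * Ind t n + 2 : ℕ) : ℝ) := by
          rw [hdouble]
          have := Nat.lt_floor_add_one (t * 2^n / d)
          push_cast
          linarith
        have := (Nat.floor_lt hy0').mpr h2
        show ⌊t * 2^(n+1) / d⌋₊ ≤ 2 * Ind t n + 1
        omega
      have heq : c n (Ind t n) = c (n+1) (2 * Ind t n) :=
        (dyadicChain_even μ a b n (Ind t n)).symm
      rw [heq, key (n+1) (2 * Ind t n) (by have := hIndle t ht n; omega)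
        (Ind t (n+1)) (hIndle t ht (n+1))]
      have hlr : ((2 * Ind t n : ℕ) : ℝ) ≤ (Ind t (n+1) : ℝ) := by exact_mod_cast hlow
      have hhr : ((Ind t (n+1) : ℕ) : ℝ) ≤ ((2 * Ind t n : ℕ) : ℝ) + 1 := by
        exact_mod_cast hhigh
      have habs : |((2 * Ind t n : ℕ) : ℝ) - ((Ind t (n+1) : ℕ) : ℝ)| ≤ 1 := by
        rw [abs_le]; constructor <;> push_cast at hlr hhr ⊢ <;> linarith
      have hpos : (0:ℝ) ≤ d / 2^(n+1) := by positivity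
      calc |((2 * Ind t n : ℕ):ℝ) - (Ind t (n+1) : ℕ)| * (d / 2^(n+1))
          ≤ 1 * (d / 2^(n+1)) := mul_le_mul_of_nonneg_right habs hpos
        _ = d / 2^(n+1) := one_mul _
    -- clamped parameter
    set cl : ℝ → ℝ := fun t => max 0 (min t d) with hcl
    have hclmem : ∀ t, cl t ∈ Icc (0:ℝ) d := by
      intro t
      exact ⟨le_max_left _ _, max_le hd0.le (min_le_right _ _)⟩
    have hclid : ∀ t ∈ Icc (0:ℝ) d, cl t = t := by
      intro t ht
      simp only [hcl]
      rw [min_eq_left ht.2, max_eq_right ht.1]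
    have hconv : ∀ t : ℝ, ∃ pt, Filter.Tendsto (fun n => c n (Ind (cl t) n))
        Filter.atTop (nhds pt) := by
      intro t
      apply cauchySeq_tendsto_of_complete
      apply cauchySeq_of_le_geometric (1/2 : ℝ) d (by norm_num)
      intro n
      have := hstep (cl t) (hclmem t) n
      calc dist (c n (Ind (cl t) n)) (c (n+1) (Ind (cl t) (n+1))) ≤ d / 2^(n+1) := this
        _ = d * (1/2)^n / 2 := by rw [div_pow, one_pow]; ring
        _ ≤ d * (1/2)^n := by
            have : (0:ℝ) ≤ d * (1/2)^n := by positivity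
            linarith
    choose γ hγ using hconv
    -- convergence of the rescaled index sequence
    have hA : ∀ t ∈ Icc (0:ℝ) d, Filter.Tendsto (fun n => ((Ind t n : ℕ) : ℝ) * (d / 2^n))
        Filter.atTop (nhds t) := by
      intro t ht
      have hy0 : ∀ n : ℕ, 0 ≤ t * 2^n / d := by
        intro n
        have := ht.1
        positivity
      apply tendsto_of_tendsto_of_tendsto_of_le_of_le
        (g := fun n : ℕ => t - d / 2^n) (h := fun _ : ℕ => t)
      · have := (tendsto_const_nhds (x := t) (f := Filter.atTop (α := ℕ))).sub h2n0
        rw [sub_zero] at this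
        exact this
      · exact tendsto_const_nhds
      · intro n
        have hfl := Nat.lt_floor_add_one (t * 2^n / d)
        have hpow : (0:ℝ) < 2^n := by positivity
        have : t / d * 2^n < (Ind t n : ℝ) + 1 := by
          simp only [hInd]
          calc t / d * 2^n = t * 2^n / d := by ring
            _ < _ := hfl
        have h2 : t < ((Ind t n : ℝ) + 1) * (d / 2^n) := by
          rw [show ((Ind t n : ℝ) + 1) * (d / 2^n) = ((Ind t n : ℝ) + 1) * d / 2^n by ring]
          rw [lt_div_iff₀ hpow]
          calc t * 2^n = t / d * 2^n * d := by field_simp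
            _ < ((Ind t n : ℝ) + 1) * d := by
                apply mul_lt_mul_of_pos_right this hd0
        have h3 : ((Ind t n : ℝ) + 1) * (d / 2^n) = (Ind t n : ℝ) * (d / 2^n) + d / 2^n := by
          ring
        rw [h3] at h2
        linarith
      · intro n
        have hfl := Nat.floor_le (hy0 n)
        have hpow : (0:ℝ) < 2^n := by positivity
        have : (Ind t n : ℝ) ≤ t * 2^n / d := hfl
        calc (Ind t n : ℝ) * (d / 2^n) ≤ (t * 2^n / d) * (d / 2^n) :=
              mul_le_mul_of_nonneg_right this (by positivity)
          _ = t := by field_simp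
    have hisometric : ∀ s ∈ Icc (0:ℝ) d, ∀ t ∈ Icc (0:ℝ) d, dist (γ s) (γ t) = |s - t| := by
      intro s hs t ht
      have hγs : Filter.Tendsto (fun n => c n (Ind s n)) Filter.atTop (nhds (γ s)) := by
        have := hγ s; rwa [hclid s hs] at this
      have hγt : Filter.Tendsto (fun n => c n (Ind t n)) Filter.atTop (nhds (γ t)) := by
        have := hγ t; rwa [hclid t ht] at this
      have t1 : Filter.Tendsto (fun n => dist (c n (Ind s n)) (c n (Ind t n)))
          Filter.atTop (nhds (dist (γ s) (γ t))) := hγs.dist hγt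
      have t2 : Filter.Tendsto (fun n => dist (c n (Ind s n)) (c n (Ind t n)))
          Filter.atTop (nhds (|s - t|)) := by
        have heq : (fun n => dist (c n (Ind s n)) (c n (Ind t n)))
            = fun n => |((Ind s n : ℕ):ℝ) * (d / 2^n) - ((Ind t n : ℕ):ℝ) * (d / 2^n)| := by
          funext n
          rw [key n (Ind s n) (hIndle s hs n) (Ind t n) (hIndle t ht n)]
          rw [← sub_mul, abs_mul, abs_of_nonneg (by positivity : (0:ℝ) ≤ d / 2^n)]
        rw [heq]
        exact ((hA s hs).sub (hA t ht)).abs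
      exact tendsto_nhds_unique t1 t2
    have hγ0 : γ 0 = a := by
      have h0 : (0:ℝ) ∈ Icc (0:ℝ) d := ⟨le_refl 0, hd0.le⟩
      have hγ0' : Filter.Tendsto (fun n => c n (Ind 0 n)) Filter.atTop (nhds (γ 0)) := by
        have := hγ 0; rwa [hclid 0 h0] at this
      have hInd0 : ∀ n, Ind 0 n = 0 := by
        intro n; simp [hInd]
      have : (fun n => c n (Ind 0 n)) = fun _ => a := by
        funext n; rw [hInd0 n]
        exact dyadicChain_zero μ a b n
      rw [this] at hγ0'
      exact tendsto_nhds_unique hγ0' tendsto_const_nhds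
    have hγd : γ d = b := by
      have hdm : d ∈ Icc (0:ℝ) d := ⟨hd0.le, le_refl d⟩
      have hγd' : Filter.Tendsto (fun n => c n (Ind d n)) Filter.atTop (nhds (γ d)) := by
        have := hγ d; rwa [hclid d hdm] at this
      have hIndd : ∀ n, Ind d n = 2^n := by
        intro n
        simp only [hInd]
        rw [show d * 2^n / d = ((2^n : ℕ) : ℝ) by push_cast; field_simp]
        exact Nat.floor_natCast _
      have : (fun n => c n (Ind d n)) = fun _ => b := by
        funext n; rw [hIndd n]
        exact dyadicChain_top μ a b n
      rw [this] at hγd'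
      exact tendsto_nhds_unique hγd' tendsto_const_nhds
    refine ⟨γ '' Icc (0:ℝ) d, ⟨d, γ, hd0.le, hγ0, hisometric, rfl⟩,
      ⟨d, ⟨hd0.le, le_refl d⟩, hγd⟩⟩

end GeodesicMain
section Helpers

lemma le_of_forall_pos_le_add' {a b : ℝ} (h : ∀ η : ℝ, 0 < η → a ≤ b + η) : a ≤ b := by
  by_contra hlt
  push_neg at hlt
  have := h ((a - b)/2) (by linarith)
  linarith

lemma limsup_add_const_le {f : ℕ → ℝ} {c L : ℝ}
    (hbd : Filter.IsBoundedUnder (· ≤ ·) Filter.atTop f)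
    (h0 : ∀ n, (0:ℝ) ≤ f n)
    (hL : Filter.limsup f Filter.atTop ≤ L) :
    Filter.limsup (fun n => f n + c) Filter.atTop ≤ L + c := by
  apply le_of_forall_pos_le_add'
  intro η hη
  have hlt : Filter.limsup f Filter.atTop < L + η := lt_of_le_of_lt hL (by linarith)
  have hev : ∀ᶠ n in Filter.atTop, f n < L + η :=
    Filter.eventually_lt_of_limsup_lt hlt hbd
  have hcb : Filter.IsCoboundedUnder (· ≤ ·) Filter.atTop (fun n => f n + c) :=
    Filter.isCoboundedUnder_le_of_le Filter.atTop (x := 0 + c)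
      (fun n => by linarith [h0 n])
  have := Filter.limsup_le_of_le (f := Filter.atTop) hcb
    (hev.mono fun n hn => by linarith : ∀ᶠ n in Filter.atTop, f n + c ≤ L + η + c)
  linarith

end Helpers

set_option maxHeartbeats 2000000 in
/-- (Eberlein–Smulian analogue.) If a bounded net in a CAT(0)
space converges weakly to `x`, then one can extract a monotone sequence of
indices along which the net converges weakly to `x`. -/
theorem exists_weakly_convergent_subsequence_of_net
    (X : Type*) [MetricSpace X] (hX : IsCAT0 X)
    {I : Type*} [Preorder I] [IsDirected I (· ≤ ·)] [Nonempty I]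
    (u : I → X) (hb : Bornology.IsBounded (Set.range u))
    (x : X) (h : WeakConv u x) :
    ∃ α : ℕ → I, Monotone α ∧ WeakConv (u ∘ α) x := by
  classical
  haveI : CompleteSpace X := hX.1
  choose μ hμ using hX.2.1
  -- uniform bound on the net
  obtain ⟨r, hr⟩ := hb.subset_closedBall x
  set M0 : ℝ := max r 0 with hM0def
  have hM0 : ∀ i, dist (u i) x ≤ M0 := fun i =>
    le_trans (by simpa [Metric.mem_closedBall] using hr (Set.mem_range_self i)) (le_max_left _ _)
  have hM0n : (0:ℝ) ≤ M0 := le_max_right _ _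
  -- geodesic segments from x and nearest-point selections
  choose seg hseg hsegmem using fun q : X => exists_geodesic hX x q
  have hsegx : ∀ q, x ∈ seg q := fun q => (geodesicFrom_props (hseg q)).1
  have hsegcpt : ∀ q, IsCompact (seg q) := fun q => (geodesicFrom_props (hseg q)).2.1
  have hsegmid : ∀ q, MidClosed (seg q) := fun q => (geodesicFrom_props (hseg q)).2.2
  choose sel hsel using fun (q : X) (i : I) =>
    nearest_of_compact (hsegcpt q) ⟨x, hsegx q⟩ (u i)
  -- tail indices from weak convergence of the net
  have htail0 : ∀ (q : X) (ε : ℝ), ∃ i₀ : I, 0 < ε → ∀ i, i₀ ≤ i → dist (sel q i) x < ε := by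
    intro q ε
    by_cases hε : 0 < ε
    · have ht := h (seg q) (hseg q) (sel q) (hsel q)
      have hev := (Metric.tendsto_nhds.mp ht) ε hε
      rw [Filter.atTop_basis.eventually_iff] at hev
      obtain ⟨i₀, _, hi₀⟩ := hev
      exact ⟨i₀, fun _ i hi => hi₀ hi⟩
    · exact ⟨Classical.arbitrary I, fun h' => absurd h' hε⟩
  choose tail htail using htail0
  -- midpoint saturation operator
  set Mop : Set X → Set X := fun A => A ∪ Set.image2 μ A A with hMopdef
  have hMople : ∀ A : Set X, A ⊆ Mop A := fun A => Set.subset_union_left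
  have hMopmono : ∀ {A B : Set X}, A ⊆ B → Mop A ⊆ Mop B := fun hAB =>
    Set.union_subset_union hAB (Set.image2_subset hAB hAB)
  have hMopfin : ∀ {A : Set X}, A.Finite → (Mop A).Finite := fun hA =>
    hA.union (Set.Finite.image2 _ hA hA)
  have hiter_mono : ∀ (k : ℕ) {A B : Set X}, A ⊆ B → Mop^[k] A ⊆ Mop^[k] B := by
    intro k
    induction k with
    | zero => intro A B hAB; simpa using hAB
    | succ k ih =>
      intro A B hAB
      rw [Function.iterate_succ_apply', Function.iterate_succ_apply']
      exact hMopmono (ih hAB)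
  have hiter_le : ∀ (k : ℕ) (A : Set X), A ⊆ Mop^[k] A := by
    intro k A
    induction k with
    | zero => simp
    | succ k ih =>
      rw [Function.iterate_succ_apply']
      exact ih.trans (hMople _)
  have hiter_fin : ∀ (k : ℕ) {A : Set X}, A.Finite → (Mop^[k] A).Finite := by
    intro k
    induction k with
    | zero => intro A hA; simpa using hA
    | succ k ih =>
      intro A hA
      rw [Function.iterate_succ_apply']
      exact hMopfin (ih hA)
  have hiter_step : ∀ (k : ℕ) (A : Set X), Mop^[k] A ⊆ Mop^[k+1] A := by
    intro k A
    rw [Function.iterate_succ_apply]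
    exact hiter_mono k (hMople A)
  -- test sets for a given history
  set base : (ℕ → I) → ℕ → Set X := fun f n => insert x ((fun m => u (f m)) '' Iio n)
    with hbasedef
  set T : (ℕ → I) → ℕ → Set X := fun f n => Mop^[n] (base f n) with hTdef
  have hbasefin : ∀ f n, (base f n).Finite := fun f n =>
    (((Set.finite_Iio n).image _).insert x)
  have hTfin : ∀ f n, (T f n).Finite := fun f n => hiter_fin n (hbasefin f n)
  -- the inductive step of the construction
  have hstepex : ∀ (f : ℕ → I) (n : ℕ), ∃ i : I,
      (∀ m, m < n → f m ≤ i) ∧ ∀ q ∈ T f n, dist (sel q i) x < 1/(n+1) := by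
    intro f n
    have hpos : (0:ℝ) < 1/(n+1) := by positivity
    set S : Set I := (f '' Iio n) ∪ ((fun q => tail q (1/(n+1))) '' T f n) with hS
    have hSfin : S.Finite := ((Set.finite_Iio n).image f).union ((hTfin f n).image _)
    obtain ⟨i₀, hi₀⟩ := hSfin.toFinset.exists_le
    refine ⟨i₀, fun m hm => ?_, fun q hq => ?_⟩
    · exact hi₀ _ (hSfin.mem_toFinset.mpr (Set.mem_union_left _ ⟨m, hm, rfl⟩))
    · have hle : tail q (1/(n+1)) ≤ i₀ :=
        hi₀ _ (hSfin.mem_toFinset.mpr (Set.mem_union_right _ ⟨q, hq, rfl⟩))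
      exact htail q (1/(n+1)) hpos i₀ hle
  choose step hstep1 hstep2 using hstepex
  -- define the history and the sequence of indices
  set A : ℕ → (ℕ → I) := fun n => Nat.rec (motive := fun _ => ℕ → I)
    (fun _ => Classical.arbitrary I) (fun k fk => Function.update fk k (step fk k)) n with hA
  set α : ℕ → I := fun n => step (A n) n with hα
  have hAsucc : ∀ n, A (n+1) = Function.update (A n) n (step (A n) n) := fun n => rfl
  have hcoh : ∀ n m, m < n → A n m = α m := by
    intro n
    induction n with
    | zero => intro m hm; omega
    | succ n ih =>
      intro m hm
      rw [hAsucc n, Function.update_apply]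
      by_cases hmn : m = n
      · subst hmn; simp [hα]
      · have hlt : m < n := by omega
        simp [hmn, ih m hlt]
  -- sets along α
  set Tn : ℕ → Set X := fun n => Mop^[n] (insert x ((fun m => u (α m)) '' Iio n)) with hTndef
  have hTeq : ∀ n, T (A n) n = Tn n := by
    intro n
    have hb' : base (A n) n = insert x ((fun m => u (α m)) '' Iio n) := by
      simp only [hbasedef]
      congr 1
      apply Set.image_congr
      intro m hm
      rw [hcoh n m hm]
    simp only [hTdef, hb', hTndef]
  have hTnmono : ∀ {m n : ℕ}, m ≤ n → Tn m ⊆ Tn n := by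
    intro m n hmn
    induction n, hmn using Nat.le_induction with
    | base => exact subset_rfl
    | succ n hmn ih =>
      refine ih.trans ?_
      have h1 : insert x ((fun m => u (α m)) '' Iio n)
          ⊆ insert x ((fun m => u (α m)) '' Iio (n+1)) :=
        Set.insert_subset_insert (Set.image_mono (Set.Iio_subset_Iio (by omega)))
      exact (hiter_mono n h1).trans (hiter_step n _)
  set Q : Set X := ⋃ n, Tn n with hQdef
  have hxQ : x ∈ Q := Set.mem_iUnion.mpr ⟨0, by simp [hTndef]⟩
  have hzQ : ∀ n, u (α n) ∈ Q := by
    intro n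
    refine Set.mem_iUnion.mpr ⟨n+1, ?_⟩
    exact hiter_le (n+1) _ (Set.mem_insert_of_mem _ ⟨n, by simp, rfl⟩)
  have hQmid : MidClosed Q := by
    intro a ha b hb'
    obtain ⟨na, hna⟩ := Set.mem_iUnion.mp ha
    obtain ⟨nb, hnb⟩ := Set.mem_iUnion.mp hb'
    refine ⟨μ a b, ?_, hμ a b⟩
    refine Set.mem_iUnion.mpr ⟨max na nb + 1, ?_⟩
    have haM : a ∈ Tn (max na nb) := hTnmono (le_max_left _ _) hna
    have hbM : b ∈ Tn (max na nb) := hTnmono (le_max_right _ _) hnb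
    have hmem : μ a b ∈ Mop (Tn (max na nb)) :=
      Set.mem_union_right _ (Set.mem_image2_of_mem haM hbM)
    have h2 : Mop (Tn (max na nb)) ⊆ Tn (max na nb + 1) := by
      simp only [hTndef]
      rw [← Function.iterate_succ_apply' Mop]
      exact hiter_mono _
        (Set.insert_subset_insert (Set.image_mono (Set.Iio_subset_Iio (by omega))))
    exact h2 hmem
  have henf : ∀ n, ∀ q ∈ Tn n, dist (sel q (α n)) x < 1/(n+1) := by
    intro n q hq
    rw [← hTeq n] at hq
    exact hstep2 (A n) n q hq
  have hmono : Monotone α := by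
    apply monotone_nat_of_le_succ
    intro n
    have h1 := hstep1 (A (n+1)) (n+1) n (by omega)
    have h2 : A (n+1) n = α n := hcoh (n+1) n (by omega)
    rw [h2] at h1
    exact h1
  refine ⟨α, hmono, ?_⟩
  -- final part: weak convergence of the extracted sequence
  intro G hG p hp
  obtain ⟨hxG, hGcpt, hGmid⟩ := geodesicFrom_props hG
  by_contra hcon
  rw [Metric.tendsto_atTop] at hcon
  push_neg at hcon
  obtain ⟨δ, hδ, hfr⟩ := hcon
  have hfreq : ∃ᶠ n in Filter.atTop, δ ≤ dist (p n) x := Filter.frequently_atTop.mpr hfr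
  obtain ⟨φ, hφmono, hφ⟩ := Filter.extraction_of_frequently_atTop hfreq
  obtain ⟨pstar, hpstarG, ψ, hψmono, hψtend⟩ := hGcpt.tendsto_subseq (fun n => (hp (φ n)).1)
  have hbdd0 : ∀ n, dist (u (α (φ (ψ n)))) x ∈ Icc (0:ℝ) M0 := fun n => ⟨dist_nonneg, hM0 _⟩
  obtain ⟨Areal, _, θ, hθmono, hθtend⟩ :=
    tendsto_subseq_of_bounded (Metric.isBounded_Icc 0 M0) hbdd0
  set τ : ℕ → ℕ := fun n => φ (ψ (θ n)) with hτdef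
  have hτmono : StrictMono τ := hφmono.comp (hψmono.comp hθmono)
  set z : ℕ → X := fun n => u (α (τ n)) with hzdef
  set w : ℕ → X := fun n => p (τ n) with hwdef
  have hwn : ∀ n, IsNearestPoint (z n) G (w n) := fun n => hp (τ n)
  have hwdist : ∀ n, δ ≤ dist (w n) x := fun n => hφ (ψ (θ n))
  have hwt : Filter.Tendsto w Filter.atTop (𝓝 pstar) := hψtend.comp hθmono.tendsto_atTop
  have hAt : Filter.Tendsto (fun n => dist (z n) x) Filter.atTop (𝓝 Areal) := hθtend
  have hδpstar : δ ≤ dist pstar x :=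
    ge_of_tendsto (hwt.dist tendsto_const_nhds) (Filter.Eventually.of_forall hwdist)
  -- the closed convex-like hull and the projection of pstar
  have hQmidC : MidClosed (closure Q) := midClosed_closure hX hQmid
  obtain ⟨p', hp'⟩ := nearest_of_closed_midClosed hX isClosed_closure hQmidC
    ⟨x, subset_closure hxQ⟩ pstar
  have hzC : ∀ n, z n ∈ closure Q := fun n => subset_closure (hzQ (τ n))
  -- limsup machinery
  set Λ : X → ℝ := fun y => Filter.limsup (fun n => dist (z n) y ^ 2) Filter.atTop with hΛdef
  have hub : ∀ y n, dist (z n) y ^ 2 ≤ (M0 + dist x y)^2 := by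
    intro y n
    have h1 : dist (z n) y ≤ M0 + dist x y :=
      le_trans (dist_triangle (z n) x y) (by have := hM0 (α (τ n)); linarith)
    have h2 : (0:ℝ) ≤ dist (z n) y := dist_nonneg
    nlinarith
  have hbd : ∀ y, Filter.IsBoundedUnder (· ≤ ·) Filter.atTop (fun n => dist (z n) y ^ 2) :=
    fun y => Filter.isBoundedUnder_of ⟨_, hub y⟩
  have hcb : ∀ y, Filter.IsCoboundedUnder (· ≤ ·) Filter.atTop (fun n => dist (z n) y ^ 2) :=
    fun y => Filter.isCoboundedUnder_le_of_le Filter.atTop (fun n => sq_nonneg _)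
  have hAx : Filter.Tendsto (fun n => dist (z n) x ^ 2) Filter.atTop (𝓝 (Areal^2)) :=
    hAt.pow 2
  -- Key 1 for points of Q
  have key1Q : ∀ q ∈ Q, Areal^2 + dist x q ^2 ≤ Λ q := by
    intro q hq
    apply le_of_forall_pos_le_add'
    intro η hη
    obtain ⟨N, hN⟩ := Set.mem_iUnion.mp hq
    set K : ℝ := 2*M0 + 2*dist x q + 1 with hKdef
    have hK0 : (0:ℝ) < K := by
      have := dist_nonneg (x := x) (y := q); simp only [hKdef]; linarith
    have hevε : ∀ᶠ n in Filter.atTop, dist (sel q (α (τ n))) x < (η/2)/K := by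
      rw [Filter.eventually_atTop]
      obtain ⟨N', hN'⟩ := exists_nat_gt (K/(η/2))
      refine ⟨max N N', fun n hn => ?_⟩
      have hτn : N ≤ τ n :=
        le_trans (le_trans (le_max_left _ _) hn) hτmono.le_apply
      have henfn := henf (τ n) q (hTnmono hτn hN)
      have hq1 : 1/((τ n : ℝ)+1) ≤ 1/((n:ℝ)+1) := by
        apply one_div_le_one_div_of_le (by positivity)
        have : (n:ℝ) ≤ (τ n : ℝ) := Nat.cast_le.mpr hτmono.le_apply
        linarith
      have hq2 : 1/((n:ℝ)+1) < (η/2)/K := by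
        rw [div_lt_div_iff₀ (by positivity) hK0]
        have hn' : (N' : ℝ) ≤ (n : ℝ) := Nat.cast_le.mpr (le_trans (le_max_right _ _) hn)
        have hgt : K/(η/2) < (N' : ℝ) := hN'
        rw [div_lt_iff₀ (by linarith : (0:ℝ) < η/2)] at hgt
        nlinarith
      calc dist (sel q (α (τ n))) x < 1/((τ n : ℝ)+1) := by exact_mod_cast henfn
        _ ≤ 1/((n:ℝ)+1) := hq1
        _ < (η/2)/K := hq2
    have hevA : ∀ᶠ n in Filter.atTop, Areal^2 - η/2 ≤ dist (z n) x ^2 := by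
      have := (Metric.tendsto_nhds.mp hAx) (η/2) (by linarith)
      refine this.mono fun n hn => ?_
      rw [Real.dist_eq] at hn
      have := abs_lt.mp hn
      linarith [this.1]
    have hevboth := hevε.and hevA
    have hfreqle : ∃ᶠ n in Filter.atTop,
        Areal^2 + dist x q ^2 - η ≤ dist (z n) q ^2 := by
      refine (hevboth.mono fun n hn => ?_).frequently
      obtain ⟨hε, hA2⟩ := hn
      set wq := sel q (α (τ n)) with hwq
      set εn := dist wq x with hεn
      have hεn0 : 0 ≤ εn := dist_nonneg
      have hproj := proj_ineq hX (hsegmid q) (hsel q (α (τ n))) (hsegmem q)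
      have t1 : dist (z n) x - εn ≤ dist (z n) wq := by
        have := dist_triangle (z n) wq x
        simp only [hzdef] at *
        linarith
      have s1 : dist (z n) x ^2 - 2*dist (z n) x * εn ≤ dist (z n) wq ^2 :=
        sq_lower dist_nonneg dist_nonneg hεn0 t1
      have t2 : dist x q - εn ≤ dist wq q := by
        have h3 := dist_triangle x wq q
        have h4 : dist x wq = εn := by rw [hεn, dist_comm]
        linarith
      have s2 : dist x q ^2 - 2*dist x q * εn ≤ dist wq q ^2 :=
        sq_lower dist_nonneg dist_nonneg hεn0 t2
      have hzx : dist (z n) x ≤ M0 := hM0 _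
      have hKe : (2*dist (z n) x + 2*dist x q) * εn ≤ K * εn := by
        apply mul_le_mul_of_nonneg_right _ hεn0
        simp only [hKdef]; linarith
      have hKe2 : K * εn ≤ η/2 := by
        have := mul_le_mul_of_nonneg_left (le_of_lt hε) (le_of_lt hK0)
        calc K * εn ≤ K * ((η/2)/K) := by
              exact mul_le_mul_of_nonneg_left (le_of_lt hε) (le_of_lt hK0)
          _ = η/2 := by field_simp
      nlinarith [hproj]
    have := Filter.le_limsup_of_frequently_le hfreqle (hbd q)
    simp only [hΛdef]
    linarith
  -- Key 1 extended to the closure of Q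
  have key1C : ∀ q ∈ closure Q, Areal^2 + dist x q ^2 ≤ Λ q := by
    intro q hq
    apply le_of_forall_pos_le_add'
    intro η hη
    set K2 : ℝ := 2*M0 + 2*dist x q + 3 with hK2def
    have hK20 : (0:ℝ) < K2 := by
      have := dist_nonneg (x := x) (y := q); simp only [hK2def]; linarith
    obtain ⟨q', hq'Q, hq'd⟩ := Metric.mem_closure_iff.mp hq (min 1 ((η/2)/K2))
      (lt_min one_pos (by positivity))
    set e := dist q q' with hedef
    have he0 : 0 ≤ e := dist_nonneg
    have he1 : e < 1 := lt_of_lt_of_le hq'd (min_le_left _ _)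
    have he2 : e < (η/2)/K2 := lt_of_lt_of_le hq'd (min_le_right _ _)
    have heK : K2 * e ≤ η/2 := by
      calc K2 * e ≤ K2 * ((η/2)/K2) := mul_le_mul_of_nonneg_left he2.le hK20.le
        _ = η/2 := by field_simp
    have hxq' : dist x q' ≤ dist x q + e := by
      have := dist_triangle x q q'
      linarith
    -- (b) : dist x q ^ 2 ≤ dist x q' ^2 + η/2
    have hbb : dist x q ^2 ≤ dist x q' ^2 + η/2 := by
      have h3 : dist x q ≤ dist x q' + e := by
        have := dist_triangle x q' q
        have h4 : dist q' q = e := by rw [hedef, dist_comm]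
        linarith
      nlinarith [dist_nonneg (x := x) (y := q), dist_nonneg (x := x) (y := q')]
    -- (c) : Λ q' ≤ Λ q + η/2
    have hcc : Λ q' ≤ Λ q + η/2 := by
      have hpt : ∀ n, dist (z n) q' ^2 ≤ dist (z n) q ^2 + η/2 := by
        intro n
        have h3 : dist (z n) q' ≤ dist (z n) q + e := by
          have := dist_triangle (z n) q q'
          linarith
        have h4 : dist (z n) q ≤ M0 + dist x q := by
          have := dist_triangle (z n) x q
          have := hM0 (α (τ n))
          simp only [hzdef] at *
          linarith
        nlinarith [dist_nonneg (x := z n) (y := q), dist_nonneg (x := z n) (y := q')]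
      have hbd2 : Filter.IsBoundedUnder (· ≤ ·) Filter.atTop
          (fun n => dist (z n) q ^2 + η/2) :=
        Filter.isBoundedUnder_of ⟨(M0 + dist x q)^2 + η/2, fun n => by
          have := hub q n; linarith⟩
      have h5 : Λ q' ≤ Filter.limsup (fun n => dist (z n) q ^2 + η/2) Filter.atTop :=
        Filter.limsup_le_limsup (Filter.Eventually.of_forall hpt) (hcb q') hbd2
      have h6 := limsup_add_const_le (f := fun n => dist (z n) q ^2) (c := η/2)
        (hbd q) (fun n => sq_nonneg _) (le_refl _)
      simp only [hΛdef]
      calc Filter.limsup (fun n => dist (z n) q' ^ 2) Filter.atTop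
          ≤ Filter.limsup (fun n => dist (z n) q ^2 + η/2) Filter.atTop := h5
        _ ≤ Filter.limsup (fun n => dist (z n) q ^2) Filter.atTop + η/2 := h6
    have hk1 := key1Q q' hq'Q
    linarith
  -- Key 2 : Λ pstar ≤ Areal^2 - δ^2
  have key2 : Λ pstar ≤ Areal^2 - δ^2 := by
    apply le_of_forall_pos_le_add'
    intro η hη
    have het : Filter.Tendsto (fun n => dist (w n) pstar) Filter.atTop (𝓝 0) := by
      have := hwt.dist (tendsto_const_nhds (x := pstar))
      simpa using this
    have hev1 : ∀ᶠ n in Filter.atTop, dist (w n) pstar < min 1 ((η/2)/(2*M0+1)) := by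
      have := (Metric.tendsto_nhds.mp het) (min 1 ((η/2)/(2*M0+1)))
        (lt_min one_pos (by positivity))
      refine this.mono fun n hn => ?_
      rw [Real.dist_eq, sub_zero] at hn
      exact lt_of_abs_lt hn
    have hev2 : ∀ᶠ n in Filter.atTop, dist (z n) x ^2 ≤ Areal^2 + η/2 := by
      have := (Metric.tendsto_nhds.mp hAx) (η/2) (by linarith)
      refine this.mono fun n hn => ?_
      rw [Real.dist_eq] at hn
      have := abs_lt.mp hn
      linarith [this.2]
    have hevboth := hev1.and hev2
    have hevle : ∀ᶠ n in Filter.atTop,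
        dist (z n) pstar ^2 ≤ Areal^2 - δ^2 + η := by
      refine hevboth.mono fun n hn => ?_
      obtain ⟨he, hA2⟩ := hn
      set en := dist (w n) pstar with hendef
      have hen0 : 0 ≤ en := dist_nonneg
      have hproj := proj_ineq hX hGmid (hwn n) hxG
      have hδ2 : δ^2 ≤ dist (w n) x ^2 := by
        have := hwdist n
        nlinarith [hδ.le]
      have hzw : dist (z n) (w n) ≤ M0 := by
        have h1 := (hwn n).2 x hxG
        have h2 := hM0 (α (τ n))
        simp only [hzdef] at *
        linarith
      have ht : dist (z n) pstar ≤ dist (z n) (w n) + en := dist_triangle _ _ _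
      have hzw0 : 0 ≤ dist (z n) (w n) := dist_nonneg
      have hsq : dist (z n) pstar ^2 ≤ dist (z n) (w n) ^2 + en*(2*M0 + en) := by
        nlinarith [dist_nonneg (x := z n) (y := pstar)]
      have hen1 : en*(2*M0+en) ≤ η/2 := by
        have h7 : en ≤ (η/2)/(2*M0+1) := (lt_of_lt_of_le he (min_le_right _ _)).le
        have h8 : en ≤ 1 := (lt_of_lt_of_le he (min_le_left _ _)).le
        have h9 : en * (2*M0+en) ≤ en * (2*M0+1) := by nlinarith
        have h10 : en * (2*M0+1) ≤ ((η/2)/(2*M0+1)) * (2*M0+1) := by nlinarith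
        have h11 : ((η/2)/(2*M0+1)) * (2*M0+1) = η/2 := by field_simp
        linarith
      nlinarith [hproj]
    have := Filter.limsup_le_of_le (hcb pstar) hevle
    simp only [hΛdef]
    linarith
  -- Key 3 : Λ p' ≤ Λ pstar
  have key3 : Λ p' ≤ Λ pstar := by
    have hpt : ∀ n, dist (z n) p' ^2 ≤ dist (z n) pstar ^2 := by
      intro n
      have hproj := proj_ineq hX hQmidC hp' (hzC n)
      have h1 : dist pstar (z n) = dist (z n) pstar := dist_comm _ _
      have h2 : dist p' (z n) = dist (z n) p' := dist_comm _ _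
      rw [h1, h2] at hproj
      nlinarith [sq_nonneg (dist pstar p')]
    exact Filter.limsup_le_limsup (Filter.Eventually.of_forall hpt) (hcb p') (hbd pstar)
  -- contradiction
  have hfinal := key1C p' hp'.1
  have hd0 : (0:ℝ) ≤ dist x p' ^2 := sq_nonneg _
  nlinarith [hδ]
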